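/- arXiv:1309.1290 — 2 statements merged into one kernel-verified Lean document; each statement's English description precedes it below -/
import Mathlib

section
/- Let u, v ∈ Γ* with u ≈ v. Then the elements of G represented by u and v are conjugate in G; moreover, if u is cyclically reduced then v is cyclically reduced. -/
/-- The set of commutator relators defining a graph product. -/
def gpRels {L : Type} (I : L → L → Prop) (G : L → Type) [∀ α, Group (G α)] :
    Set (Monoid.CoprodI G) :=
  {x | ∃ (α β : L) (g : G α) (h : G β), I α β ∧
    x = Monoid.CoprodI.of g * Monoid.CoprodI.of h *
        (Monoid.CoprodI.of g)⁻¹ * (Monoid.CoprodI.of h)⁻¹}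

/-- The graph product of the groups `G α` over the independence relation `I`. -/
def GP {L : Type} (I : L → L → Prop) (G : L → Type) [∀ α, Group (G α)] : Type :=
  Monoid.CoprodI G ⧸ Subgroup.normalClosure (gpRels I G)

instance {L : Type} (I : L → L → Prop) (G : L → Type) [∀ α, Group (G α)] :
    Group (GP I G) := QuotientGroup.Quotient.group _

/-- The canonical homomorphism of a node group into the graph product. -/
def gpOf {L : Type} (I : L → L → Prop) (G : L → Type) [∀ α, Group (G α)] (α : L) :
    G α →* GP I G :=
  (QuotientGroup.mk' _).comp Monoid.CoprodI.of

/-- A letter: a nontrivial element of one of the node groups. -/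
abbrev Letter (L : Type) (G : L → Type) [∀ α, Group (G α)] : Type :=
  Σ α : L, {g : G α // g ≠ 1}

variable {L : Type} (I : L → L → Prop) (G : L → Type) [∀ α, Group (G α)]

/-- The element of the graph product represented by a word. -/
def evalWord (w : List (Letter L G)) : GP I G :=
  (w.map fun l => gpOf I G l.1 l.2.1).prod

/-- One elementary commutation step between trace-equivalent words. -/
inductive TraceStep : List (Letter L G) → List (Letter L G) → Prop
  | swap (u v : List (Letter L G)) (a b : Letter L G) (h : I a.1 b.1) :
      TraceStep (u ++ a :: b :: v) (u ++ b :: a :: v)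

/-- Trace equivalence: the congruence generated by commuting independent letters. -/
def TraceEquiv : List (Letter L G) → List (Letter L G) → Prop :=
  Relation.EqvGen (TraceStep I G)

/-- `IndepWord I G β u` means every letter of `u` is independent of `β`,
i.e. `u ∈ I(β)`. -/
def IndepWord (β : L) (u : List (Letter L G)) : Prop := ∀ c ∈ u, I c.1 β

/-- A word is reduced if it contains no factor `b u b'` with `b, b' ∈ Γ_β`
and `u ∈ I(β)`. -/
def Reduced (w : List (Letter L G)) : Prop :=
  ¬ ∃ (β : L) (b b' : {g : G β // g ≠ 1}) (x u y : List (Letter L G)),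
      w = x ++ (⟨β, b⟩ : Letter L G) :: (u ++ (⟨β, b'⟩ : Letter L G) :: y) ∧
      IndepWord I G β u

/-- `|w|_α` : number of letters of `w` in `Γ_α`. -/
noncomputable def countAlpha (α : L) (w : List (Letter L G)) : ℕ :=
  (w.filter fun l => Classical.propDecidable (l.1 = α) |>.decide).length

/-- The alphabet `al(w)` of a word. -/
def alph (w : List (Letter L G)) : Set L := {α | ∃ l ∈ w, l.1 = α}

/-- A reduced word is cyclically reduced if it has no factorization `≡ a v a'`
with `a, a'` letters from the same node group. -/
def IsCyclicallyReduced (w : List (Letter L G)) : Prop :=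
  Reduced I G w ∧
  ¬ ∃ (α : L) (a a' : {g : G α // g ≠ 1}) (v : List (Letter L G)),
      TraceEquiv I G w ((⟨α, a⟩ : Letter L G) :: (v ++ [(⟨α, a'⟩ : Letter L G)]))

/-- Words `u` and `v` are transposed if `u ≡ r s` and `v ≡ s r`. -/
def Transposed (u v : List (Letter L G)) : Prop :=
  ∃ r s : List (Letter L G), TraceEquiv I G u (r ++ s) ∧ TraceEquiv I G v (s ++ r)

/-- `u ≈ v` : the reflexive-transitive closure of transposition. -/
def TransClosure : List (Letter L G) → List (Letter L G) → Prop :=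
  Relation.ReflTransGen (Transposed I G)

/-- The formal inverse of a letter. -/
def letterInv (l : Letter L G) : Letter L G :=
  ⟨l.1, ⟨(l.2 : G l.1)⁻¹, inv_ne_one.mpr l.2.2⟩⟩

/-- The formal inverse `p̄` of a word `p`. -/
def wordInv (w : List (Letter L G)) : List (Letter L G) :=
  (w.map (letterInv G)).reverse

/-- The dependence graph on `L`: distinct nodes are adjacent iff not independent. -/
def depGraph : SimpleGraph L where
  Adj a b := a ≠ b ∧ ¬ I a b ∧ ¬ I b a
  symm := by
    constructor
    intro a b ⟨h1, h2, h3⟩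
    exact ⟨h1.symm, h3, h2⟩
  loopless := by constructor; intro a ⟨h1, _⟩; exact h1 rfl

/-- A word is connected if its alphabet induces a connected subgraph of the
dependence graph. -/
def ConnectedWord (w : List (Letter L G)) : Prop :=
  ((depGraph I).induce (alph G w)).Connected

/-- A word `w` is `α`-reduced if every word with fewer letters from `Γ_α`
represents a different element of the graph product. -/
def AlphaReduced (α : L) (w : List (Letter L G)) : Prop :=
  ∀ w' : List (Letter L G), countAlpha G α w' < countAlpha G α w →
    evalWord I G w' ≠ evalWord I G w

namespace GPAux

variable {L : Type} {I : L → L → Prop} {G : L → Type} [∀ α, Group (G α)]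

lemma step_symm (hsym : ∀ α β, I α β → I β α) {u v : List (Letter L G)}
    (h : TraceStep I G u v) : TraceStep I G v u := by
  cases h with
  | swap x y a b hab => exact TraceStep.swap x y b a (hsym _ _ hab)

lemma equiv_of_step {u v : List (Letter L G)} (h : TraceStep I G u v) :
    TraceEquiv I G u v := Relation.EqvGen.rel _ _ h

lemma equiv_refl (u : List (Letter L G)) : TraceEquiv I G u u := Relation.EqvGen.refl u

lemma equiv_symm {u v : List (Letter L G)} (h : TraceEquiv I G u v) : TraceEquiv I G v u :=
  Relation.EqvGen.symm _ _ h

lemma equiv_trans {u v w : List (Letter L G)} (h1 : TraceEquiv I G u v)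
    (h2 : TraceEquiv I G v w) : TraceEquiv I G u w := Relation.EqvGen.trans _ _ _ h1 h2

lemma equiv_of_rtg {u v : List (Letter L G)}
    (h : Relation.ReflTransGen (TraceStep I G) u v) : TraceEquiv I G u v := by
  induction h with
  | refl => exact equiv_refl _
  | tail _ h ih => exact equiv_trans ih (equiv_of_step h)

lemma rtg_of_equiv (hsym : ∀ α β, I α β → I β α) {u v : List (Letter L G)}
    (h : TraceEquiv I G u v) : Relation.ReflTransGen (TraceStep I G) u v := by
  induction h with
  | rel x y h => exact Relation.ReflTransGen.single h
  | refl x => exact Relation.ReflTransGen.refl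
  | symm x y h ih =>
    haveI : Std.Symm (TraceStep I G) := ⟨fun a b => step_symm hsym⟩
    exact (Relation.ReflTransGen.symmetric).symm _ _ ih
  | trans x y z h1 h2 ih1 ih2 => exact ih1.trans ih2

lemma step_append_left (x : List (Letter L G)) {u v : List (Letter L G)}
    (h : TraceStep I G u v) : TraceStep I G (x ++ u) (x ++ v) := by
  cases h with
  | swap p q a b hab =>
    have := TraceStep.swap (I := I) (G := G) (x ++ p) q a b hab
    simpa [List.append_assoc] using this

lemma step_append_right (y : List (Letter L G)) {u v : List (Letter L G)}
    (h : TraceStep I G u v) : TraceStep I G (u ++ y) (v ++ y) := by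
  cases h with
  | swap p q a b hab =>
    have := TraceStep.swap (I := I) (G := G) p (q ++ y) a b hab
    simpa [List.append_assoc] using this

lemma equiv_append_left (x : List (Letter L G)) {u v : List (Letter L G)}
    (h : TraceEquiv I G u v) : TraceEquiv I G (x ++ u) (x ++ v) := by
  induction h with
  | rel a b h => exact equiv_of_step (step_append_left x h)
  | refl a => exact equiv_refl _
  | symm a b h ih => exact equiv_symm ih
  | trans a b c h1 h2 ih1 ih2 => exact equiv_trans ih1 ih2

lemma equiv_append_right (y : List (Letter L G)) {u v : List (Letter L G)}
    (h : TraceEquiv I G u v) : TraceEquiv I G (u ++ y) (v ++ y) := by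
  induction h with
  | rel a b h => exact equiv_of_step (step_append_right y h)
  | refl a => exact equiv_refl _
  | symm a b h ih => exact equiv_symm ih
  | trans a b c h1 h2 ih1 ih2 => exact equiv_trans ih1 ih2

lemma equiv_cons (l : Letter L G) {u v : List (Letter L G)} (h : TraceEquiv I G u v) :
    TraceEquiv I G (l :: u) (l :: v) := equiv_append_left [l] h

/-- Move a letter to the front past letters that commute with it. -/
lemma equiv_front {p q : List (Letter L G)} {l : Letter L G}
    (hp : ∀ c ∈ p, I c.1 l.1) :
    TraceEquiv I G (p ++ l :: q) (l :: (p ++ q)) := by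
  induction p with
  | nil => exact equiv_refl _
  | cons c p ih =>
    have h1 : TraceEquiv I G (c :: (p ++ l :: q)) (c :: (l :: (p ++ q))) :=
      equiv_cons c (ih (fun d hd => hp d (List.mem_cons_of_mem _ hd)))
    have h2 : TraceStep I G (c :: l :: (p ++ q)) (l :: c :: (p ++ q)) :=
      TraceStep.swap [] (p ++ q) c l (hp c (List.mem_cons_self))
    exact equiv_trans h1 (equiv_of_step h2)

/-- Move a letter to the back past letters that commute with it. -/
lemma equiv_back (hsym : ∀ α β, I α β → I β α) {q : List (Letter L G)} {l : Letter L G}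
    (hq : ∀ c ∈ q, I c.1 l.1) :
    TraceEquiv I G (l :: q) (q ++ [l]) := by
  induction q with
  | nil => exact equiv_refl _
  | cons c q ih =>
    have h1 : TraceStep I G (l :: c :: q) (c :: l :: q) :=
      TraceStep.swap [] q l c (hsym _ _ (hq c (List.mem_cons_self)))
    have h2 : TraceEquiv I G (c :: (l :: q)) (c :: (q ++ [l])) :=
      equiv_cons c (ih (fun d hd => hq d (List.mem_cons_of_mem _ hd)))
    exact equiv_trans (equiv_of_step h1) h2

lemma step_reverse (hsym : ∀ α β, I α β → I β α) {u v : List (Letter L G)}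
    (h : TraceStep I G u v) : TraceStep I G u.reverse v.reverse := by
  cases h with
  | swap p q a b hab =>
    have := TraceStep.swap (I := I) (G := G) q.reverse p.reverse b a (hsym _ _ hab)
    simpa [List.reverse_append, List.append_assoc] using this

lemma equiv_reverse (hsym : ∀ α β, I α β → I β α) {u v : List (Letter L G)}
    (h : TraceEquiv I G u v) : TraceEquiv I G u.reverse v.reverse := by
  induction h with
  | rel a b h => exact equiv_of_step (step_reverse hsym h)
  | refl a => exact equiv_refl _
  | symm a b h ih => exact equiv_symm ih
  | trans a b c h1 h2 ih1 ih2 => exact equiv_trans ih1 ih2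

end GPAux
namespace GPAux
variable {L : Type} {I : L → L → Prop} {G : L → Type} [∀ α, Group (G α)]

lemma evalWord_append (u v : List (Letter L G)) :
    evalWord I G (u ++ v) = evalWord I G u * evalWord I G v := by
  simp [evalWord]

lemma gpOf_comm {α β : L} (h : I β α) (g : G α) (k : G β) :
    gpOf I G α g * gpOf I G β k = gpOf I G β k * gpOf I G α g := by
  have hmem : Monoid.CoprodI.of k⁻¹ * Monoid.CoprodI.of g⁻¹ *
      (Monoid.CoprodI.of (M := G) k⁻¹)⁻¹ * (Monoid.CoprodI.of (M := G) g⁻¹)⁻¹ ∈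
      Subgroup.normalClosure (gpRels I G) :=
    Subgroup.subset_normalClosure ⟨β, α, k⁻¹, g⁻¹, h, rfl⟩
  show QuotientGroup.mk' _ (Monoid.CoprodI.of g) * QuotientGroup.mk' _ (Monoid.CoprodI.of k)
      = QuotientGroup.mk' _ (Monoid.CoprodI.of k) * QuotientGroup.mk' _ (Monoid.CoprodI.of g)
  show QuotientGroup.mk' _ (Monoid.CoprodI.of g * Monoid.CoprodI.of k)
      = QuotientGroup.mk' _ (Monoid.CoprodI.of k * Monoid.CoprodI.of g)
  rw [QuotientGroup.mk'_eq_mk']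
  refine ⟨(Monoid.CoprodI.of g * Monoid.CoprodI.of k)⁻¹ *
    (Monoid.CoprodI.of k * Monoid.CoprodI.of g), ?_, by group⟩
  convert hmem using 1
  simp [map_inv]
  group

lemma evalWord_step (hsym : ∀ α β, I α β → I β α) {u v : List (Letter L G)}
    (h : TraceStep I G u v) : evalWord I G u = evalWord I G v := by
  cases h with
  | swap p q a b hab =>
    simp only [evalWord, List.map_append, List.map_cons, List.prod_append, List.prod_cons]
    rw [← mul_assoc (gpOf I G a.1 a.2.1), gpOf_comm (hsym _ _ hab), mul_assoc]

lemma evalWord_equiv (hsym : ∀ α β, I α β → I β α) {u v : List (Letter L G)}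
    (h : TraceEquiv I G u v) : evalWord I G u = evalWord I G v := by
  induction h with
  | rel a b h => exact evalWord_step hsym h
  | refl a => rfl
  | symm a b h ih => exact ih.symm
  | trans a b c h1 h2 ih1 ih2 => exact ih1.trans ih2

end GPAux
namespace GPAux
variable {L : Type} {I : L → L → Prop} {G : L → Type} [∀ α, Group (G α)]

lemma reduced_step (hirr : ∀ α, ¬ I α α) (hsym : ∀ α β, I α β → I β α)
    {w₁ w₂ : List (Letter L G)} (h : TraceStep I G w₁ w₂) (hr : Reduced I G w₁) :
    Reduced I G w₂ := by
  cases h with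
  | swap u v a b hab =>
  rintro ⟨β, b₁, b₂, x, m, y, heq, hind⟩
  apply hr
  rcases List.append_eq_append_iff.mp heq with ⟨t, hx, hv⟩ | ⟨t, hu, hrest⟩
  · -- x = u ++ t, b :: a :: v = t ++ (bb₁ :: (m ++ bb₂ :: y))
    subst hx
    cases t with
    | nil =>
      simp only [List.nil_append] at hv
      injection hv with h1 h2
      subst h1
      cases m with
      | nil =>
        simp only [List.nil_append] at h2
        injection h2 with h3 h4
        subst h3
        exact absurd hab (hirr β)
      | cons c m₁ =>
        simp only [List.cons_append] at h2
        injection h2 with h3 h4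
        subst h3; subst h4
        refine ⟨β, b₁, b₂, u ++ [a], m₁, y, by simp, ?_⟩
        exact fun c hc => hind c (List.mem_cons_of_mem _ hc)
    | cons c t₂ =>
      simp only [List.cons_append] at hv
      injection hv with h1 h2
      subst h1
      cases t₂ with
      | nil =>
        simp only [List.nil_append] at h2
        injection h2 with h3 h4
        subst h3; subst h4
        refine ⟨β, b₁, b₂, u, b :: m, y, by simp, ?_⟩
        intro c hc
        rcases List.mem_cons.mp hc with rfl | hc
        · exact hsym _ _ hab
        · exact hind c hc
      | cons d t₃ =>
        simp only [List.cons_append] at h2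
        injection h2 with h3 h4
        subst h3; subst h4
        exact ⟨β, b₁, b₂, u ++ a :: b :: t₃, m, y, by simp, hind⟩
  · -- u = x ++ t, bb₁ :: (m ++ bb₂ :: y) = t ++ (b :: a :: v)
    subst hu
    cases t with
    | nil =>
      simp only [List.nil_append] at hrest
      injection hrest with h1 h2
      subst h1
      cases m with
      | nil =>
        simp only [List.nil_append] at h2
        injection h2 with h3 h4
        subst h3
        exact absurd hab (hirr β)
      | cons c m₁ =>
        simp only [List.cons_append] at h2
        injection h2 with h3 h4
        subst h3; subst h4
        refine ⟨β, b₁, b₂, x ++ [c], m₁, y, by simp, ?_⟩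
        exact fun d hd => hind d (List.mem_cons_of_mem _ hd)
    | cons c t₂ =>
      simp only [List.cons_append] at hrest
      injection hrest with h1 h2
      subst h1
      rcases List.append_eq_append_iff.mp h2 with ⟨s, ht₂, h3⟩ | ⟨s, hm, h3⟩
      · -- t₂ = m ++ s, bb₂ :: y = s ++ b :: a :: v
        subst ht₂
        cases s with
        | nil =>
          simp only [List.nil_append] at h3
          injection h3 with h4 h5
          subst h4; subst h5
          refine ⟨β, b₁, b₂, x, m ++ [a], v, by simp, ?_⟩
          intro c hc
          rcases List.mem_append.mp hc with hc | hc
          · exact hind c hc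
          · rcases List.mem_singleton.mp hc with rfl
            exact hab
        | cons d s₂ =>
          simp only [List.cons_append] at h3
          injection h3 with h4 h5
          subst h4; subst h5
          exact ⟨β, b₁, b₂, x, m, s₂ ++ a :: b :: v, by simp, hind⟩
      · -- m = t₂ ++ s, b :: a :: v = s ++ bb₂ :: y
        subst hm
        cases s with
        | nil =>
          simp only [List.nil_append] at h3
          injection h3 with h4 h5
          subst h4; subst h5
          refine ⟨β, b₁, b₂, x, t₂ ++ [a], v, by simp, ?_⟩
          intro c hc
          rcases List.mem_append.mp hc with hc | hc
          · exact hind c (List.mem_append_left _ hc)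
          · rcases List.mem_singleton.mp hc with rfl
            exact hab
        | cons d s₂ =>
          simp only [List.cons_append] at h3
          injection h3 with h4 h5
          subst h4
          cases s₂ with
          | nil =>
            simp only [List.nil_append] at h5
            injection h5 with h6 h7
            subst h6; subst h7
            refine ⟨β, b₁, b₂, x, t₂, b :: v, by simp, ?_⟩
            exact fun c hc => hind c (List.mem_append_left _ hc)
          | cons e s₃ =>
            simp only [List.cons_append] at h5
            injection h5 with h6 h7
            subst h6; subst h7
            refine ⟨β, b₁, b₂, x, t₂ ++ a :: b :: s₃, y, by simp, ?_⟩
            intro c hc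
            apply hind c
            simp only [List.mem_append, List.mem_cons] at hc ⊢
            tauto

lemma reduced_equiv (hirr : ∀ α, ¬ I α α) (hsym : ∀ α β, I α β → I β α)
    {u v : List (Letter L G)} (h : TraceEquiv I G u v) (hr : Reduced I G u) :
    Reduced I G v := by
  have h' := rtg_of_equiv hsym h
  clear h
  induction h' with
  | refl => exact hr
  | tail _ hs ih => exact reduced_step hirr hsym hs ih

end GPAux
namespace GPAux
variable {L : Type} {I : L → L → Prop} {G : L → Type} [∀ α, Group (G α)]

lemma levi_head (hsym : ∀ α β, I α β → I β α) {w t : List (Letter L G)} {l : Letter L G}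
    (h : TraceEquiv I G w (l :: t)) :
    ∃ p q : List (Letter L G), w = p ++ l :: q ∧ (∀ c ∈ p, I c.1 l.1) ∧
      TraceEquiv I G (p ++ q) t := by
  have chain : Relation.ReflTransGen (TraceStep I G) (l :: t) w := by
    haveI : Std.Symm (TraceStep I G) := ⟨fun a b => step_symm hsym⟩
    exact (Relation.ReflTransGen.symmetric).symm _ _ (rtg_of_equiv hsym h)
  clear h
  induction chain with
  | refl => exact ⟨[], t, rfl, by simp, equiv_refl _⟩
  | tail _ hs ih =>
    obtain ⟨p, q, hw, hp, hpq⟩ := ih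
    cases hs with
    | swap u v a b hab =>
    rcases List.append_eq_append_iff.mp hw with ⟨s, hps, h2⟩ | ⟨s, hus, h2⟩
    · -- p = u ++ s, a :: b :: v = s ++ (l :: q)
      subst hps
      cases s with
      | nil =>
        simp only [List.nil_append] at h2
        injection h2 with h3 h4
        subst h3; subst h4
        refine ⟨u ++ [b], v, by simp, ?_, ?_⟩
        · intro c hc
          rcases List.mem_append.mp hc with hc | hc
          · exact hp c (by simpa using hc)
          · rcases List.mem_singleton.mp hc with rfl
            exact hsym _ _ hab
        · simpa using hpq
      | cons c s₂ =>
        simp only [List.cons_append] at h2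
        injection h2 with h3 h4
        subst h3
        cases s₂ with
        | nil =>
          simp only [List.nil_append] at h4
          injection h4 with h5 h6
          subst h5; subst h6
          refine ⟨u, a :: v, by simp, ?_, ?_⟩
          · exact fun c hc => hp c (List.mem_append_left _ hc)
          · simpa using hpq
        | cons d s₃ =>
          simp only [List.cons_append] at h4
          injection h4 with h5 h6
          subst h5; subst h6
          refine ⟨u ++ b :: a :: s₃, q, by simp, ?_, ?_⟩
          · intro c hc
            apply hp c
            simp only [List.mem_append, List.mem_cons] at hc ⊢
            tauto
          · have hstep := equiv_of_step (TraceStep.swap (I := I) (G := G) u (s₃ ++ q) a b hab)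
            have hpq2 : TraceEquiv I G (u ++ a :: b :: (s₃ ++ q)) t := by
              simpa [List.append_assoc] using hpq
            refine equiv_trans (equiv_symm ?_) hpq2
            simpa [List.append_assoc] using hstep
    · -- u = p ++ s, l :: q = s ++ (a :: b :: v)
      subst hus
      cases s with
      | nil =>
        simp only [List.nil_append] at h2
        injection h2 with h3 h4
        subst h3; subst h4
        refine ⟨p ++ [b], v, by simp, ?_, ?_⟩
        · intro c hc
          rcases List.mem_append.mp hc with hc | hc
          · exact hp c hc
          · rcases List.mem_singleton.mp hc with rfl
            exact hsym _ _ hab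
        · simpa using hpq
      | cons c s₂ =>
        simp only [List.cons_append] at h2
        injection h2 with h3 h4
        subst h3; subst h4
        refine ⟨p, s₂ ++ b :: a :: v, by simp, hp, ?_⟩
        have hstep := equiv_of_step (TraceStep.swap (I := I) (G := G) (p ++ s₂) v a b hab)
        refine equiv_trans (equiv_symm ?_) hpq
        simpa [List.append_assoc] using hstep

lemma levi_last (hsym : ∀ α β, I α β → I β α) {w t : List (Letter L G)} {l : Letter L G}
    (h : TraceEquiv I G w (t ++ [l])) :
    ∃ p q : List (Letter L G), w = p ++ l :: q ∧ (∀ c ∈ q, I c.1 l.1) ∧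
      TraceEquiv I G (p ++ q) t := by
  have h' : TraceEquiv I G w.reverse (l :: t.reverse) := by
    have := equiv_reverse hsym h
    simpa [List.reverse_append] using this
  obtain ⟨p₀, q₀, hw, hp₀, hpq₀⟩ := levi_head hsym h'
  refine ⟨q₀.reverse, p₀.reverse, ?_, ?_, ?_⟩
  · have : w.reverse.reverse = (p₀ ++ l :: q₀).reverse := by rw [hw]
    simpa [List.reverse_append] using this
  · intro c hc
    exact hp₀ c (by simpa using hc)
  · have := equiv_reverse hsym hpq₀
    simpa [List.reverse_append] using this

end GPAux
namespace GPAux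
variable {L : Type} {I : L → L → Prop} {G : L → Type} [∀ α, Group (G α)]

lemma cr_equiv (hirr : ∀ α, ¬ I α α) (hsym : ∀ α β, I α β → I β α)
    {u v : List (Letter L G)} (h : TraceEquiv I G u v)
    (hu : IsCyclicallyReduced I G u) : IsCyclicallyReduced I G v := by
  refine ⟨reduced_equiv hirr hsym h hu.1, ?_⟩
  rintro ⟨α, a, a', m, hm⟩
  exact hu.2 ⟨α, a, a', m, equiv_trans h hm⟩

lemma cr_rot (hirr : ∀ α, ¬ I α α) (hsym : ∀ α β, I α β → I β α)
    {x : List (Letter L G)} {c : Letter L G}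
    (h : IsCyclicallyReduced I G (x ++ [c])) : IsCyclicallyReduced I G (c :: x) := by
  constructor
  · -- Reduced (c :: x)
    rintro ⟨β, b₁, b₂, x₀, m, y, heq, hind⟩
    cases x₀ with
    | nil =>
      simp only [List.nil_append] at heq
      injection heq with h1 h2
      subst h1; subst h2
      -- word is ⟨β,b₁⟩ :: (m ++ ⟨β,b₂⟩ :: y), so x ++ [c] = m ++ ⟨β,b₂⟩ :: (y ++ [⟨β,b₁⟩])
      apply h.2
      refine ⟨β, b₂, b₁, m ++ y, ?_⟩
      have hmv : TraceEquiv I G (m ++ (⟨β, b₂⟩ : Letter L G) :: (y ++ [(⟨β, b₁⟩ : Letter L G)]))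
          ((⟨β, b₂⟩ : Letter L G) :: (m ++ (y ++ [(⟨β, b₁⟩ : Letter L G)]))) :=
        equiv_front (fun d hd => hind d hd)
      simpa [List.append_assoc] using hmv
    | cons d x₁ =>
      simp only [List.cons_append] at heq
      injection heq with h1 h2
      subst h1; subst h2
      exact h.1 ⟨β, b₁, b₂, x₁, m, y ++ [c], by simp, hind⟩
  · -- no factorization a v a'
    rintro ⟨α, a₀, a₀', mm, hmm⟩
    obtain ⟨p, q, hcx, hpcomm, hpq⟩ := levi_head hsym hmm
    obtain ⟨p₂, q₂, hpq2, hq2comm, _⟩ := levi_last hsym hpq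
    -- locate a₀' inside p ++ q : it cannot be in p
    have hq : ∃ q₁, q = q₁ ++ (⟨α, a₀'⟩ : Letter L G) :: q₂ := by
      rcases List.append_eq_append_iff.mp hpq2 with ⟨s, hp2, h2⟩ | ⟨s, hps, h2⟩
      · exact ⟨s, h2⟩
      · cases s with
        | nil =>
          simp only [List.nil_append] at h2
          exact ⟨[], h2.symm⟩
        | cons e s₂ =>
          simp only [List.cons_append] at h2
          injection h2 with h3 h4
          subst h3
          exact absurd (hpcomm ⟨α, a₀'⟩ (by rw [hps]; simp)) (hirr α)
    obtain ⟨q₁, rfl⟩ := hq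
    cases p with
    | nil =>
      simp only [List.nil_append] at hcx
      injection hcx with h1 h2
      subst h1; subst h2
      -- x ++ [c] with c = ⟨α,a₀⟩, x = q₁ ++ ⟨α,a₀'⟩ :: q₂
      have e2 : TraceEquiv I G ((⟨α, a₀'⟩ : Letter L G) :: q₂) (q₂ ++ [(⟨α, a₀'⟩ : Letter L G)]) :=
        equiv_back hsym hq2comm
      have e0 : TraceEquiv I G ((q₁ ++ (⟨α, a₀'⟩ : Letter L G) :: q₂) ++ [(⟨α, a₀⟩ : Letter L G)])
          ((q₁ ++ q₂) ++ (⟨α, a₀'⟩ : Letter L G) :: [(⟨α, a₀⟩ : Letter L G)]) := by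
        have := equiv_append_right [(⟨α, a₀⟩ : Letter L G)] (equiv_append_left q₁ e2)
        simpa [List.append_assoc] using this
      have hred := reduced_equiv hirr hsym e0 h.1
      exact hred ⟨α, a₀', a₀, q₁ ++ q₂, [], [], by simp, fun d hd => absurd hd List.not_mem_nil⟩
    | cons e p₁ =>
      simp only [List.cons_append] at hcx
      injection hcx with h1 h2
      subst h1; subst h2
      -- x = p₁ ++ ⟨α,a₀⟩ :: (q₁ ++ ⟨α,a₀'⟩ :: q₂)
      have hccomm : I c.1 α := hpcomm c (List.mem_cons_self)
      have hp₁comm : ∀ d ∈ p₁, I d.1 α := fun d hd => hpcomm d (List.mem_cons_of_mem _ hd)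
      have e2 : TraceEquiv I G ((⟨α, a₀'⟩ : Letter L G) :: (q₂ ++ [c]))
          ((q₂ ++ [c]) ++ [(⟨α, a₀'⟩ : Letter L G)]) := by
        refine equiv_back hsym ?_
        intro d hd
        rcases List.mem_append.mp hd with hd | hd
        · exact hq2comm d hd
        · rcases List.mem_singleton.mp hd with rfl
          exact hccomm
      have e0 : TraceEquiv I G
          ((p₁ ++ (⟨α, a₀⟩ : Letter L G) :: (q₁ ++ (⟨α, a₀'⟩ : Letter L G) :: q₂)) ++ [c])
          ((⟨α, a₀⟩ : Letter L G) :: (p₁ ++ (q₁ ++ ((⟨α, a₀'⟩ : Letter L G) :: (q₂ ++ [c]))))) := by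
        have := equiv_front (I := I) (G := G) (p := p₁)
          (q := q₁ ++ (⟨α, a₀'⟩ : Letter L G) :: (q₂ ++ [c])) (l := (⟨α, a₀⟩ : Letter L G))
          hp₁comm
        simpa [List.append_assoc] using this
      have e1 : TraceEquiv I G
          ((⟨α, a₀⟩ : Letter L G) :: (p₁ ++ (q₁ ++ ((⟨α, a₀'⟩ : Letter L G) :: (q₂ ++ [c])))))
          ((⟨α, a₀⟩ : Letter L G) :: (p₁ ++ (q₁ ++ ((q₂ ++ [c]) ++ [(⟨α, a₀'⟩ : Letter L G)])))) :=
        equiv_cons _ (equiv_append_left p₁ (equiv_append_left q₁ e2))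
      apply h.2
      refine ⟨α, a₀, a₀', p₁ ++ (q₁ ++ (q₂ ++ [c])), ?_⟩
      have := equiv_trans e0 e1
      simpa [List.append_assoc] using this

/-- One-letter rotation of a word. -/
def Rot (u v : List (Letter L G)) : Prop :=
  ∃ (c : Letter L G) (t : List (Letter L G)), u = t ++ [c] ∧ v = c :: t

lemma rot_chain (s : List (Letter L G)) :
    ∀ r : List (Letter L G), Relation.ReflTransGen (Rot (G := G)) (r ++ s) (s ++ r) := by
  induction s using List.reverseRecOn with
  | nil => intro r; simpa using Relation.ReflTransGen.refl
  | append_singleton s₁ c ih =>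
    intro r
    have h1 : Rot (G := G) ((r ++ s₁) ++ [c]) (c :: (r ++ s₁)) := ⟨c, r ++ s₁, rfl, rfl⟩
    have step : Relation.ReflTransGen (Rot (G := G)) (r ++ (s₁ ++ [c])) (c :: (r ++ s₁)) := by
      rw [← List.append_assoc]
      exact Relation.ReflTransGen.single h1
    have h2' : Relation.ReflTransGen (Rot (G := G)) (c :: (r ++ s₁)) ((s₁ ++ [c]) ++ r) := by
      have e1 : (c :: r) ++ s₁ = c :: (r ++ s₁) := by simp
      have e2 : s₁ ++ (c :: r) = (s₁ ++ [c]) ++ r := by simp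
      rw [← e1, ← e2]
      exact ih (c :: r)
    exact step.trans h2'

lemma cr_rot_rtg (hirr : ∀ α, ¬ I α α) (hsym : ∀ α β, I α β → I β α)
    {w w' : List (Letter L G)} (h : Relation.ReflTransGen (Rot (G := G)) w w')
    (hw : IsCyclicallyReduced I G w) : IsCyclicallyReduced I G w' := by
  induction h with
  | refl => exact hw
  | tail _ hrot ih =>
    obtain ⟨c, t, rfl, rfl⟩ := hrot
    exact cr_rot hirr hsym ih

lemma cr_transposed (hirr : ∀ α, ¬ I α α) (hsym : ∀ α β, I α β → I β α)
    {u v : List (Letter L G)} (h : Transposed I G u v)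
    (hu : IsCyclicallyReduced I G u) : IsCyclicallyReduced I G v := by
  obtain ⟨r, s, h1, h2⟩ := h
  have hrs : IsCyclicallyReduced I G (r ++ s) := cr_equiv hirr hsym h1 hu
  have hsr : IsCyclicallyReduced I G (s ++ r) :=
    cr_rot_rtg hirr hsym (rot_chain s r) hrs
  exact cr_equiv hirr hsym (equiv_symm h2) hsr

lemma conj_transposed (hsym : ∀ α β, I α β → I β α) {u v : List (Letter L G)}
    (h : Transposed I G u v) : IsConj (evalWord I G u) (evalWord I G v) := by
  obtain ⟨r, s, h1, h2⟩ := h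
  rw [evalWord_equiv hsym h1, evalWord_equiv hsym h2, evalWord_append, evalWord_append]
  exact isConj_iff.mpr ⟨evalWord I G s, by group⟩

end GPAux

theorem transposition_closure_implies_conjugate
    {L : Type} [Finite L] (I : L → L → Prop) (G : L → Type) [∀ α, Group (G α)]
    (hirr : ∀ α, ¬ I α α) (hsym : ∀ α β, I α β → I β α)
    (u v : List (Letter L G)) (huv : TransClosure I G u v) :
    IsConj (evalWord I G u) (evalWord I G v) ∧
    (IsCyclicallyReduced I G u → IsCyclicallyReduced I G v) := by
  constructor
  · induction huv with
    | refl => exact IsConj.refl _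
    | tail _ h ih => exact ih.trans (GPAux.conj_transposed hsym h)
  · intro hu
    induction huv with
    | refl => exact hu
    | tail _ h ih => exact GPAux.cr_transposed hirr hsym h ih
end

section
/- Let w ∈ Γ* and suppose al(w) = A_1 ∪ ⋯ ∪ A_k, where A_1, …, A_k are the connected components of the subgraph of (L, D) induced by al(w). Then there exist words w_1, …, w_k ∈ Γ* with w ≡ w_1 ⋯ w_k, al(w_i) = A_i for each i, and w_i w_j ≡ w_j w_i for all 1 ≤ i < j ≤ k; moreover, if w is reduced then each w_i is reduced. -/
variable {L : Type} (I : L → L → Prop) (G : L → Type) [∀ α, Group (G α)]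

namespace GPaux

/-- classical boolean membership -/
noncomputable def pmem (A : Set L) (l : Letter L G) : Bool :=
  @decide (l.1 ∈ A) (Classical.propDecidable _)

lemma pmem_iff (A : Set L) (l : Letter L G) : pmem G A l = true ↔ l.1 ∈ A := by
  unfold pmem; exact @decide_eq_true_iff _ (Classical.propDecidable _)

lemma te_refl (u : List (Letter L G)) : TraceEquiv I G u u := Relation.EqvGen.refl u

lemma step_append_left (x : List (Letter L G)) {u v : List (Letter L G)}
    (h : TraceStep I G u v) : TraceStep I G (x ++ u) (x ++ v) := by
  cases h with
  | swap u' v' a b hI =>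
    rw [← List.append_assoc, ← List.append_assoc]
    exact TraceStep.swap (x ++ u') v' a b hI

lemma step_append_right (y : List (Letter L G)) {u v : List (Letter L G)}
    (h : TraceStep I G u v) : TraceStep I G (u ++ y) (v ++ y) := by
  cases h with
  | swap u' v' a b hI =>
    have := TraceStep.swap (I := I) (G := G) u' (v' ++ y) a b hI
    simpa [List.append_assoc] using this

lemma te_append_left (x : List (Letter L G)) {u v : List (Letter L G)}
    (h : TraceEquiv I G u v) : TraceEquiv I G (x ++ u) (x ++ v) := by
  induction h with
  | rel _ _ h => exact .rel _ _ (step_append_left I G x h)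
  | refl _ => exact .refl _
  | symm _ _ _ ih => exact .symm _ _ ih
  | trans _ _ _ _ _ ih1 ih2 => exact .trans _ _ _ ih1 ih2

lemma te_append_right (y : List (Letter L G)) {u v : List (Letter L G)}
    (h : TraceEquiv I G u v) : TraceEquiv I G (u ++ y) (v ++ y) := by
  induction h with
  | rel _ _ h => exact .rel _ _ (step_append_right I G y h)
  | refl _ => exact .refl _
  | symm _ _ _ ih => exact .symm _ _ ih
  | trans _ _ _ _ _ ih1 ih2 => exact .trans _ _ _ ih1 ih2

lemma te_congr {u u' v v' : List (Letter L G)} (h1 : TraceEquiv I G u u')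
    (h2 : TraceEquiv I G v v') : TraceEquiv I G (u ++ v) (u' ++ v') :=
  .trans _ _ _ (te_append_right I G v h1) (te_append_left I G u' h2)

lemma te_cons (a : Letter L G) {u v : List (Letter L G)}
    (h : TraceEquiv I G u v) : TraceEquiv I G (a :: u) (a :: v) :=
  te_append_left I G [a] h

lemma move (a : Letter L G) (u : List (Letter L G)) (h : ∀ c ∈ u, I a.1 c.1) :
    TraceEquiv I G (a :: u) (u ++ [a]) := by
  induction u with
  | nil => exact .refl _
  | cons c u ih =>
    have h1 : TraceStep I G (a :: c :: u) (c :: a :: u) := by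
      simpa using TraceStep.swap (I := I) (G := G) [] u a c (h c (by simp))
    exact .trans _ _ _ (.rel _ _ h1)
      (te_cons I G c (ih fun d hd => h d (by simp [hd])))

lemma move_mid (a : Letter L G) (u v : List (Letter L G)) (h : ∀ c ∈ u, I a.1 c.1) :
    TraceEquiv I G (a :: (u ++ v)) (u ++ a :: v) := by
  have := te_append_right I G v (move I G a u h)
  simpa [List.append_assoc] using this

lemma comm (u v : List (Letter L G)) (h : ∀ c ∈ u, ∀ d ∈ v, I c.1 d.1) :
    TraceEquiv I G (u ++ v) (v ++ u) := by
  induction u with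
  | nil => simpa using te_refl I G v
  | cons a u ih =>
    exact .trans _ _ _ (te_cons I G a (ih fun c hc => h c (by simp [hc])))
      (move_mid I G a v u (fun c hc => h a (by simp) c hc))

lemma partition (p : Letter L G → Bool) (w : List (Letter L G))
    (h : ∀ a ∈ w, ∀ b ∈ w, p a = true → p b = false → I b.1 a.1) :
    TraceEquiv I G w (w.filter p ++ w.filter (fun l => !p l)) := by
  induction w with
  | nil => exact .refl _
  | cons a t ih =>
    have ih' := ih fun x hx y hy => h x (by simp [hx]) y (by simp [hy])
    by_cases hp : p a = true
    · simp only [List.filter_cons, hp, Bool.not_true, if_true, if_false, cond_true]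
      simpa [hp] using te_cons I G a ih'
    · have hpf : p a = false := by simpa using hp
      have step2 : TraceEquiv I G (a :: (t.filter p ++ t.filter (fun l => !p l)))
          (t.filter p ++ a :: t.filter (fun l => !p l)) :=
        move_mid I G a (t.filter p) _ (fun c hc =>
          h c (by simp [List.mem_of_mem_filter hc]) a (by simp)
            (List.of_mem_filter hc) hpf)
      have := Relation.EqvGen.trans _ _ _ (te_cons I G a ih') step2
      simpa [List.filter_cons, hpf, TraceEquiv] using this

lemma filter_split (p : Letter L G → Bool) :
    ∀ (w x y : List (Letter L G)) (a : Letter L G),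
    w.filter p = x ++ a :: y →
    ∃ x' y', w = x' ++ a :: y' ∧ x'.filter p = x ∧ y'.filter p = y := by
  intro w
  induction w with
  | nil =>
    intro x y a h
    rw [List.filter_nil] at h
    cases x <;> exact absurd h (by simp)
  | cons b t ih =>
    intro x y a h
    by_cases hb : p b = true
    · rw [List.filter_cons_of_pos hb] at h
      cases x with
      | nil =>
        simp at h
        obtain ⟨rfl, hy⟩ := h
        exact ⟨[], t, rfl, rfl, hy⟩
      | cons c x =>
        simp at h
        obtain ⟨rfl, ht⟩ := h
        obtain ⟨x', y', rfl, hx', hy'⟩ := ih x y a ht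
        exact ⟨b :: x', y', rfl, by rw [List.filter_cons_of_pos hb, hx'], hy'⟩
    · rw [List.filter_cons_of_neg (by simpa using hb)] at h
      obtain ⟨x', y', rfl, hx', hy'⟩ := ih x y a h
      exact ⟨b :: x', y', rfl, by rw [List.filter_cons_of_neg (by simpa using hb), hx'], hy'⟩

end GPaux

namespace GPaux

lemma sort (k : ℕ) :
    ∀ (A : Fin k → Set L)
    (_ : ∀ i j, i ≠ j → ∀ α ∈ A i, ∀ β ∈ A j, I α β)
    (_ : ∀ i j, i ≠ j → Disjoint (A i) (A j))
    (w : List (Letter L G)) (_ : ∀ l ∈ w, ∃ i, l.1 ∈ A i),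
    TraceEquiv I G w (List.ofFn fun i => w.filter (pmem G (A i))).flatten := by
  induction k with
  | zero =>
    intro A _ _ w hw
    cases w with
    | nil => simp only [List.ofFn_zero, List.flatten_nil]; exact .refl _
    | cons a t => obtain ⟨i, _⟩ := hw a (by simp); exact i.elim0
  | succ k ih =>
    intro A Hcomm hdisj w hw
    set p0 := pmem G (A 0) with hp0
    have hpart : TraceEquiv I G w (w.filter p0 ++ w.filter (fun l => !p0 l)) := by
      apply partition
      intro a ha b hb hpa hpb
      obtain ⟨j, hj⟩ := hw b hb
      have hj0 : j ≠ 0 := by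
        rintro rfl
        have : p0 b = true := (pmem_iff G (A 0) b).mpr hj
        rw [this] at hpb; exact Bool.true_eq_false.mp hpb
      exact Hcomm j 0 hj0 _ hj _ ((pmem_iff G _ a).mp hpa)
    set v := w.filter (fun l => !p0 l) with hv
    have hvw : ∀ l ∈ v, l ∈ w ∧ l.1 ∉ A 0 := by
      intro l hl
      refine ⟨List.mem_of_mem_filter hl, fun h0 => ?_⟩
      have h1 := List.of_mem_filter hl
      have h2 : p0 l = true := (pmem_iff G (A 0) l).mpr h0
      rw [h2] at h1; exact Bool.false_ne_true (by simpa using h1)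
    have ihv := ih (fun i => A i.succ)
      (fun i j hij => Hcomm i.succ j.succ (by simpa using hij))
      (fun i j hij => hdisj i.succ j.succ (by simpa using hij))
      v
      (by
        intro l hl
        obtain ⟨hlw, hl0⟩ := hvw l hl
        obtain ⟨i, hi⟩ := hw l hlw
        have hi0 : i ≠ 0 := by rintro rfl; exact hl0 hi
        obtain ⟨i', rfl⟩ := Fin.eq_succ_of_ne_zero hi0
        exact ⟨i', hi⟩)
    have hblocks : ∀ i : Fin k,
        v.filter (pmem G (A i.succ)) = w.filter (pmem G (A i.succ)) := by
      intro i
      rw [hv, List.filter_filter]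
      apply List.filter_congr
      intro a _
      by_cases hpa : pmem G (A i.succ) a = true
      · have ha0 : a.1 ∉ A 0 := fun h0 =>
          Set.disjoint_left.mp (hdisj i.succ 0 (Fin.succ_ne_zero i))
            ((pmem_iff G _ a).mp hpa) h0
        have hp0a : p0 a = false := by
          rw [hp0]
          cases h : pmem G (A 0) a with
          | false => rfl
          | true => exact absurd ((pmem_iff G _ a).mp h) ha0
        simp [hpa, hp0a]
      · have : pmem G (A i.succ) a = false := by
          cases h : pmem G (A i.succ) a with
          | false => rfl
          | true => exact absurd h hpa
        simp [this]
    have hflat : (List.ofFn fun i : Fin (k + 1) => w.filter (pmem G (A i))).flatten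
        = w.filter p0 ++
          (List.ofFn fun i : Fin k => v.filter (pmem G (A i.succ))).flatten := by
      rw [List.ofFn_succ, List.flatten_cons]
      simp only [hblocks, hp0]
    rw [hflat]
    exact .trans _ _ _ hpart (te_append_left I G _ ihv)

end GPaux

theorem decomposition_into_connected_components
    {L : Type} [Finite L] (I : L → L → Prop) (G : L → Type) [∀ α, Group (G α)]
    (hirr : ∀ α, ¬ I α α) (hsym : ∀ α β, I α β → I β α)
    (w : List (Letter L G)) (k : ℕ) (A : Fin k → Set L)
    (hunion : (⋃ i, A i) = alph G w)
    (hne : ∀ i, (A i).Nonempty)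
    (hdisj : ∀ i j, i ≠ j → Disjoint (A i) (A j))
    (hconn : ∀ i, ((depGraph I).induce (A i)).Connected)
    (hsep : ∀ i j, i ≠ j → ∀ a ∈ A i, ∀ b ∈ A j, ¬ (depGraph I).Adj a b) :
    ∃ ws : Fin k → List (Letter L G),
      TraceEquiv I G w (List.ofFn ws).flatten ∧
      (∀ i, alph G (ws i) = A i) ∧
      (∀ i j, i ≠ j → TraceEquiv I G (ws i ++ ws j) (ws j ++ ws i)) ∧
      (Reduced I G w → ∀ i, Reduced I G (ws i)) := by
  classical
  have Hcomm : ∀ i j, i ≠ j → ∀ α ∈ A i, ∀ β ∈ A j, I α β := by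
    intro i j hij α hα β hβ
    have hne' : α ≠ β := by
      rintro rfl; exact Set.disjoint_left.mp (hdisj i j hij) hα hβ
    by_contra hI
    exact hsep i j hij α hα β hβ ⟨hne', hI, fun h => hI (hsym β α h)⟩
  have hw_all : ∀ l ∈ w, ∃ i, l.1 ∈ A i := by
    intro l hl
    have hmem : l.1 ∈ alph G w := ⟨l, hl, rfl⟩
    rw [← hunion] at hmem; exact Set.mem_iUnion.mp hmem
  refine ⟨fun i => w.filter (GPaux.pmem G (A i)),
    GPaux.sort I G k A Hcomm hdisj w hw_all, ?_, ?_, ?_⟩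
  · intro i; ext α
    constructor
    · rintro ⟨l, hl, rfl⟩
      exact (GPaux.pmem_iff G _ l).mp (List.of_mem_filter hl)
    · intro hα
      have hmem : α ∈ alph G w := hunion ▸ Set.mem_iUnion.mpr ⟨i, hα⟩
      obtain ⟨l, hl, rfl⟩ := hmem
      exact ⟨l, List.mem_filter.mpr ⟨hl, (GPaux.pmem_iff G _ l).mpr hα⟩, rfl⟩
  · intro i j hij
    apply GPaux.comm
    intro c hc d hd
    exact Hcomm i j hij _ ((GPaux.pmem_iff G _ c).mp (List.of_mem_filter hc))
      _ ((GPaux.pmem_iff G _ d).mp (List.of_mem_filter hd))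
  · intro hwred i
    rintro ⟨β, b, b', x, u, y, heq, hind⟩
    have heq' : w.filter (GPaux.pmem G (A i))
        = x ++ (⟨β, b⟩ : Letter L G) :: (u ++ (⟨β, b'⟩ : Letter L G) :: y) := heq
    obtain ⟨x1, y1, hw1, hx1, hy1⟩ :=
      GPaux.filter_split G (GPaux.pmem G (A i)) w x (u ++ (⟨β, b'⟩ : Letter L G) :: y)
        ⟨β, b⟩ heq
    obtain ⟨u1, y2, hy1', hu1, hy2⟩ :=
      GPaux.filter_split G (GPaux.pmem G (A i)) y1 u y ⟨β, b'⟩ hy1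
    have hβ : β ∈ A i := by
      have hb1 : (⟨β, b⟩ : Letter L G) ∈ w.filter (GPaux.pmem G (A i)) := by
        rw [heq']; simp
      exact (GPaux.pmem_iff G _ _).mp (List.of_mem_filter hb1)
    refine hwred ⟨β, b, b', x1, u1, y2, by rw [hw1, hy1'], ?_⟩
    intro c hc
    by_cases hpc : GPaux.pmem G (A i) c = true
    · exact hind c (hu1 ▸ List.mem_filter.mpr ⟨hc, hpc⟩)
    · have hcw : c ∈ w := by rw [hw1, hy1']; simp [hc]
      obtain ⟨j, hj⟩ : ∃ j, c.1 ∈ A j := by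
        have hmem : c.1 ∈ alph G w := ⟨c, hcw, rfl⟩
        rw [← hunion] at hmem; exact Set.mem_iUnion.mp hmem
      have hji : j ≠ i := by
        rintro rfl; exact hpc ((GPaux.pmem_iff G _ c).mpr hj)
      exact Hcomm j i hji _ hj _ hβ
end
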